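/- If 𝔹 is a complete Boolean algebra satisfying the countable chain condition, then in bSet 𝔹 the truth value of the statement 'there exists a surjection from ω̌ onto ℵ₁̌' is ⊥, and likewise the truth value of 'there exists a surjection from ℵ₁̌ onto ℵ₂̌' is ⊥. More generally, for infinite regular cardinals κ₁ < κ₂, CCC implies that no nonzero truth value forces a surjection from κ₁̌ onto κ₂̌. -/

import Mathlib

universe u

/-- Boolean-valued sets over a complete Boolean algebra `𝔹`. -/
inductive bSet (𝔹 : Type u) [CompleteBooleanAlgebra 𝔹] : Type (u + 1)
  | mk (α : Type u) (A : α → bSet 𝔹) (B : α → 𝔹) : bSet 𝔹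

namespace bSet

variable {𝔹 : Type u} [CompleteBooleanAlgebra 𝔹]

/-- Boolean-valued equality:
`⟨α,A,B⟩ =ᴮ ⟨α\u0027,A\u0027,B\u0027⟩ := (⨅ a, B a ⟹ ⨆ a\u0027, B\u0027 a\u0027 ⊓ (A a =ᴮ A\u0027 a\u0027)) ⊓ (symmetrically)`. -/
def bvEq : bSet 𝔹 → bSet 𝔹 → 𝔹
  | ⟨_, A, B⟩, ⟨_, A', B'⟩ =>
      (⨅ a, B a ⇨ ⨆ a', B' a' ⊓ bvEq (A a) (A' a')) ⊓
      (⨅ a', B' a' ⇨ ⨆ a, B a ⊓ bvEq (A a) (A' a'))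

/-- Boolean-valued membership: `x ∈ᴮ ⟨α,A,B⟩ := ⨆ a, B a ⊓ (x =ᴮ A a)`. -/
def bvMem (x : bSet 𝔹) : bSet 𝔹 → 𝔹
  | ⟨_, A, B⟩ => ⨆ a, B a ⊓ bvEq x (A a)

/-- Boolean-valued subset. -/
def bvSubset : bSet 𝔹 → bSet 𝔹 → 𝔹
  | ⟨_, A, B⟩, y => ⨅ a, B a ⇨ bvMem (A a) y

/-- Boolean-valued biimplication. -/
def biimp (a b : 𝔹) : 𝔹 := (a ⇨ b) ⊓ (b ⇨ a)

end bSet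

namespace bSet

variable (𝔹 : Type u) [CompleteBooleanAlgebra 𝔹]

/-- The canonical name map `check : pSet → bSet 𝔹`, assigning truth value `⊤` everywhere. -/
def check : PSet.{u} → bSet 𝔹
  | ⟨α, A⟩ => ⟨α, fun a => check (A a), fun _ => ⊤⟩

variable {𝔹}

/-- The unordered pair `{x, y}` in `bSet 𝔹`. -/
def bvUPair (x y : bSet 𝔹) : bSet 𝔹 :=
  ⟨ULift Bool, fun b => cond b.down x y, fun _ => ⊤⟩

/-- The Kuratowski ordered pair `(x, y) = {{x}, {x, y}}` in `bSet 𝔹`. -/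
def kpair (x y : bSet 𝔹) : bSet 𝔹 := bvUPair (bvUPair x x) (bvUPair x y)

/-- Truth value that `f` is a functional set of ordered pairs. -/
def isFunc (f : bSet 𝔹) : 𝔹 :=
  (⨅ w : bSet 𝔹, bvMem w f ⇨ ⨆ x : bSet 𝔹, ⨆ y : bSet 𝔹, bvEq w (kpair x y)) ⊓
  (⨅ x : bSet 𝔹, ⨅ y : bSet 𝔹, ⨅ y' : bSet 𝔹,
    (bvMem (kpair x y) f ⊓ bvMem (kpair x y') f) ⇨ bvEq y y')

/-- Truth value that `f` is total on `x` with values in `y`. -/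
def isTotal (x y f : bSet 𝔹) : 𝔹 :=
  ⨅ a : bSet 𝔹, bvMem a x ⇨ ⨆ b : bSet 𝔹, bvMem b y ⊓ bvMem (kpair a b) f

/-- Truth value that `f` is a function from `x` to `y`. -/
def isFunc' (x y f : bSet 𝔹) : 𝔹 :=
  isFunc f ⊓ isTotal x y f ⊓
    (⨅ a : bSet 𝔹, ⨅ b : bSet 𝔹, bvMem (kpair a b) f ⇨ (bvMem a x ⊓ bvMem b y))

/-- Truth value that every element of `y` is a value of `f` taken on `x`. -/
def isSurj (x y f : bSet 𝔹) : 𝔹 :=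
  ⨅ b : bSet 𝔹, bvMem b y ⇨ ⨆ a : bSet 𝔹, bvMem a x ⊓ bvMem (kpair a b) f

/-- Truth value that `f` is a surjective function from `x` onto `y`. -/
def isSurjOnto (x y f : bSet 𝔹) : 𝔹 := isFunc' x y f ⊓ isSurj x y f

end bSet

/-- The von Neumann encoding of an ordinal as a `PSet`: the elements of
`ordinalMk o` are the `ordinalMk`s of the ordinals below `o`. -/
noncomputable def ordinalMk (o : Ordinal.{u}) : PSet.{u} :=
  ⟨o.ToType, fun i => ordinalMk (@Ordinal.typein o.ToType (· < ·) isWellOrder_lt i)⟩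
  termination_by o
  decreasing_by exact Ordinal.typein_lt_self i

/-- A complete Boolean algebra has the countable chain condition if every antichain
has countable image. -/
def CCC (𝔹 : Type u) [CompleteBooleanAlgebra 𝔹] : Prop :=
  ∀ (ι : Type u) (a : ι → 𝔹), (∀ i j, i ≠ j → a i ⊓ a j = ⊥) →
    (Set.range a).Countable


namespace bSet

variable {𝔹 : Type u} [CompleteBooleanAlgebra 𝔹]

theorem bvEq_refl : ∀ x : bSet 𝔹, bvEq x x = ⊤
  | ⟨α, A, B⟩ => by
    rw [bvEq, eq_top_iff]
    refine le_inf (le_iInf fun a => le_himp_iff.2 ?_) (le_iInf fun a => le_himp_iff.2 ?_) <;>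
      exact le_iSup_of_le a (by simp [bvEq_refl (A a)])

theorem bvEq_symm : ∀ x y : bSet 𝔹, bvEq x y = bvEq y x
  | ⟨α, A, B⟩, ⟨α', A', B'⟩ => by
    rw [bvEq, bvEq, inf_comm]
    exact congrArg₂ _
      (iInf_congr fun a' => congrArg _ <| iSup_congr fun a =>
        congrArg _ (bvEq_symm (A a) (A' a')))
      (iInf_congr fun a => congrArg _ <| iSup_congr fun a' =>
        congrArg _ (bvEq_symm (A a) (A' a')))

theorem bvEq_euc : ∀ x y z : bSet 𝔹, bvEq x y ⊓ bvEq z y ≤ bvEq x z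
  | ⟨α, A, B⟩, ⟨β, A', B'⟩, ⟨γ, A'', B''⟩ => by
    set L := bvEq (⟨α, A, B⟩ : bSet 𝔹) ⟨β, A', B'⟩ ⊓ bvEq (⟨γ, A'', B''⟩ : bSet 𝔹) ⟨β, A', B'⟩
      with hL
    have h1 : ∀ a, L ≤ B a ⇨ ⨆ b, B' b ⊓ bvEq (A a) (A' b) := fun a =>
      le_trans inf_le_left (by rw [bvEq]; exact le_trans inf_le_left (iInf_le _ a))
    have h2 : ∀ c, L ≤ B'' c ⇨ ⨆ b, B' b ⊓ bvEq (A'' c) (A' b) := fun c =>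
      le_trans inf_le_right (by rw [bvEq]; exact le_trans inf_le_left (iInf_le _ c))
    have h3 : ∀ b, L ≤ B' b ⇨ ⨆ c, B'' c ⊓ bvEq (A'' c) (A' b) := fun b =>
      le_trans inf_le_right (by rw [bvEq]; exact le_trans inf_le_right (iInf_le _ b))
    have h4 : ∀ b, L ≤ B' b ⇨ ⨆ a, B a ⊓ bvEq (A a) (A' b) := fun b =>
      le_trans inf_le_left (by rw [bvEq]; exact le_trans inf_le_right (iInf_le _ b))
    rw [bvEq]
    refine le_inf (le_iInf fun a => le_himp_iff.2 ?_) (le_iInf fun c => le_himp_iff.2 ?_)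
    · have : L ⊓ B a ≤ L ⊓ ⨆ b, B' b ⊓ bvEq (A a) (A' b) :=
        le_inf inf_le_left (le_trans (inf_le_inf_right _ (h1 a)) himp_inf_le)
      refine le_trans this ?_
      rw [inf_iSup_eq]
      refine iSup_le fun b => ?_
      have step : L ⊓ (B' b ⊓ bvEq (A a) (A' b)) ≤
          (⨆ c, B'' c ⊓ bvEq (A'' c) (A' b)) ⊓ bvEq (A a) (A' b) := by
        refine le_inf ?_ (le_trans inf_le_right inf_le_right)
        calc L ⊓ (B' b ⊓ bvEq (A a) (A' b)) ≤ L ⊓ B' b :=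
              inf_le_inf_left _ inf_le_left
          _ ≤ _ := le_trans (inf_le_inf_right _ (h3 b)) himp_inf_le
      refine le_trans step ?_
      rw [iSup_inf_eq]
      refine iSup_le fun c => le_iSup_of_le c ?_
      have : B'' c ⊓ bvEq (A'' c) (A' b) ⊓ bvEq (A a) (A' b) =
          B'' c ⊓ (bvEq (A a) (A' b) ⊓ bvEq (A'' c) (A' b)) := by ac_rfl
      rw [this]
      exact inf_le_inf_left _ (bvEq_euc (A a) (A' b) (A'' c))
    · have : L ⊓ B'' c ≤ L ⊓ ⨆ b, B' b ⊓ bvEq (A'' c) (A' b) :=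
        le_inf inf_le_left (le_trans (inf_le_inf_right _ (h2 c)) himp_inf_le)
      refine le_trans this ?_
      rw [inf_iSup_eq]
      refine iSup_le fun b => ?_
      have step : L ⊓ (B' b ⊓ bvEq (A'' c) (A' b)) ≤
          (⨆ a, B a ⊓ bvEq (A a) (A' b)) ⊓ bvEq (A'' c) (A' b) := by
        refine le_inf ?_ (le_trans inf_le_right inf_le_right)
        calc L ⊓ (B' b ⊓ bvEq (A'' c) (A' b)) ≤ L ⊓ B' b :=
              inf_le_inf_left _ inf_le_left
          _ ≤ _ := le_trans (inf_le_inf_right _ (h4 b)) himp_inf_le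
      refine le_trans step ?_
      rw [iSup_inf_eq]
      refine iSup_le fun a => le_iSup_of_le a ?_
      have : B a ⊓ bvEq (A a) (A' b) ⊓ bvEq (A'' c) (A' b) =
          B a ⊓ (bvEq (A a) (A' b) ⊓ bvEq (A'' c) (A' b)) := by ac_rfl
      rw [this]
      exact inf_le_inf_left _ (bvEq_euc (A a) (A' b) (A'' c))

theorem bvEq_trans (x y z : bSet 𝔹) : bvEq x y ⊓ bvEq y z ≤ bvEq x z := by
  rw [bvEq_symm y z]; exact bvEq_euc x y z

/-- right-congruence of membership. -/
theorem bvEq_bvMem_right : ∀ (y z x : bSet 𝔹), bvEq y z ⊓ bvMem x y ≤ bvMem x z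
  | ⟨β, A', B'⟩, ⟨γ, A'', B''⟩, x => by
    rw [bvMem, bvMem, inf_iSup_eq]
    refine iSup_le fun b => ?_
    have h1 : bvEq (⟨β, A', B'⟩ : bSet 𝔹) ⟨γ, A'', B''⟩ ⊓ B' b ≤
        ⨆ c, B'' c ⊓ bvEq (A' b) (A'' c) := by
      rw [bvEq]
      exact le_trans (inf_le_inf_right _ (le_trans inf_le_left (iInf_le _ b))) himp_inf_le
    calc bvEq (⟨β, A', B'⟩ : bSet 𝔹) ⟨γ, A'', B''⟩ ⊓ (B' b ⊓ bvEq x (A' b))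
        ≤ (⨆ c, B'' c ⊓ bvEq (A' b) (A'' c)) ⊓ bvEq x (A' b) := by
          rw [← inf_assoc]; exact inf_le_inf_right _ h1
      _ ≤ ⨆ c, B'' c ⊓ bvEq x (A'' c) := by
          rw [iSup_inf_eq]
          refine iSup_le fun c => le_iSup_of_le c ?_
          rw [inf_assoc, inf_comm (bvEq (A' b) (A'' c))]
          exact inf_le_inf_left _ (bvEq_trans x (A' b) (A'' c))

/-- left-congruence of membership. -/
theorem bvEq_bvMem_left : ∀ (x y z : bSet 𝔹), bvEq x y ⊓ bvMem x z ≤ bvMem y z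
  | x, y, ⟨γ, A'', B''⟩ => by
    rw [bvMem, bvMem, inf_iSup_eq]
    refine iSup_le fun c => le_iSup_of_le c ?_
    rw [inf_left_comm]
    refine inf_le_inf_left _ ?_
    have := bvEq_euc y x (A'' c)
    rwa [bvEq_symm y x, bvEq_symm (A'' c) x] at this

theorem bvEq_upair {x x' y y' : bSet 𝔹} :
    bvEq x x' ⊓ bvEq y y' ≤ bvEq (bvUPair x y) (bvUPair x' y') := by
  rw [bvUPair, bvUPair, bvEq]
  refine le_inf (le_iInf fun b => le_himp_iff.2 ?_) (le_iInf fun b => le_himp_iff.2 ?_) <;>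
  · refine le_trans inf_le_left ?_
    refine le_iSup_of_le b ?_
    obtain ⟨_ | _⟩ := b <;> simp

theorem bvEq_kpair_left (a b c : bSet 𝔹) :
    bvEq a b ≤ bvEq (kpair a c) (kpair b c) := by
  rw [kpair, kpair]
  have h1 : bvEq a b ≤ bvEq (bvUPair a a) (bvUPair b b) :=
    le_trans (le_inf le_rfl le_rfl) bvEq_upair
  have h2 : bvEq a b ≤ bvEq (bvUPair a c) (bvUPair b c) := by
    refine le_trans ?_ bvEq_upair
    rw [bvEq_refl c]; simp
  exact le_trans (le_inf h1 h2) bvEq_upair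

theorem check_bvEq_bot : ∀ x y : PSet.{u}, ¬ PSet.Equiv x y →
    bvEq (check 𝔹 x) (check 𝔹 y) = ⊥
  | ⟨α, A⟩, ⟨β, Bf⟩, h => by
    rw [check, check, bvEq, eq_bot_iff]
    rw [PSet.Equiv] at h
    push_neg at h
    rcases Classical.em (∀ a, ∃ b, PSet.Equiv (A a) (Bf b)) with hab | hab
    · obtain ⟨b, hb⟩ := h hab
      refine le_trans inf_le_right (le_trans (iInf_le _ b) ?_)
      simp only [top_himp]
      refine iSup_le fun a => ?_
      rw [check_bvEq_bot (A a) (Bf b) (hb a)]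
      simp
    · push_neg at hab
      obtain ⟨a, ha⟩ := hab
      refine le_trans inf_le_left (le_trans (iInf_le _ a) ?_)
      simp only [top_himp]
      refine iSup_le fun b => ?_
      rw [check_bvEq_bot (A a) (Bf b) (ha b)]
      simp

theorem check_bvMem_top : ∀ (x : PSet.{u}) (i : x.Type),
    bvMem (check 𝔹 (x.Func i)) (check 𝔹 x) = ⊤
  | ⟨α, A⟩, i => by
    rw [check, bvMem, eq_top_iff]
    exact le_iSup_of_le i (by simp [bvEq_refl, PSet.Func])

end bSet

theorem ordinalMk_inj : ∀ o o' : Ordinal.{u},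
    PSet.Equiv (ordinalMk o) (ordinalMk o') → o = o' := by
  intro o
  induction o using Ordinal.induction with
  | h o IH =>
    intro o' h
    rcases lt_trichotomy o o' with hlt | heq | hlt
    · exfalso
      rw [ordinalMk, ordinalMk, PSet.Equiv] at h
      obtain ⟨j, hj⟩ := @Ordinal.typein_surj o'.ToType (· < ·) isWellOrder_lt _
        (by rw [Ordinal.type_toType]; exact hlt)
      obtain ⟨i, hi⟩ := h.2 j
      have h2 := IH _ (Ordinal.typein_lt_self i) _ hi
      have h3 := Ordinal.typein_lt_self i
      rw [h2, hj] at h3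
      exact lt_irrefl o h3
    · exact heq
    · exfalso
      rw [ordinalMk, ordinalMk, PSet.Equiv] at h
      obtain ⟨i, hi⟩ := @Ordinal.typein_surj o.ToType (· < ·) isWellOrder_lt _
        (by rw [Ordinal.type_toType]; exact hlt)
      obtain ⟨j, hj⟩ := h.1 i
      have h2 := IH _ (Ordinal.typein_lt_self i) _ hj
      rw [hi] at h2
      exact absurd (Ordinal.typein_lt_self j) (by rw [← h2]; exact lt_irrefl o')

theorem ordinalMk_pairwise' (o : Ordinal.{u}) :
    ∀ i j : o.ToType, i ≠ j →
      ¬ PSet.Equiv (ordinalMk (@Ordinal.typein o.ToType (· < ·) isWellOrder_lt i))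
        (ordinalMk (@Ordinal.typein o.ToType (· < ·) isWellOrder_lt j)) := by
  intro i j hne hequiv
  have h2 := ordinalMk_inj _ _ hequiv
  rw [Ordinal.typein_inj] at h2
  exact hne h2

open bSet Cardinal in
/-- The key counting lemma: assuming CCC, a nonzero `Γ` cannot force a surjection of
`(check ⟨ι₁, A₁⟩)` onto `(check ⟨ι₂, A₂⟩)` when the elements of the codomain are pairwise
non-equivalent and `#ι₂ > #ι₁ * ℵ₀`. -/
theorem ccc_main_lemma {𝔹 : Type u} [CompleteBooleanAlgebra 𝔹] (hccc : CCC 𝔹)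
    {ι₁ ι₂ : Type u} {A₁ : ι₁ → PSet.{u}} {A₂ : ι₂ → PSet.{u}}
    (hp₂ : ∀ i j : ι₂, i ≠ j → ¬ PSet.Equiv (A₂ i) (A₂ j))
    (hcard : ¬ (#ι₂ ≤ #ι₁ * ℵ₀))
    (f : bSet 𝔹) (Γ : 𝔹) (hΓ : ⊥ < Γ)
    (hle : Γ ≤ isSurjOnto (check 𝔹 ⟨ι₁, A₁⟩) (check 𝔹 ⟨ι₂, A₂⟩) f) : False := by
  set M : ι₁ → ι₂ → 𝔹 :=
    fun i j => bvMem (kpair (check 𝔹 (A₁ i)) (check 𝔹 (A₂ j))) f with hM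
  -- Step A: for every j, Γ forces some i to be mapped to j
  have hA : ∀ j : ι₂, Γ ≤ ⨆ i : ι₁, M i j := by
    intro j
    have h : Γ ≤ bvMem (check 𝔹 (A₂ j)) (check 𝔹 ⟨ι₂, A₂⟩) ⇨
        ⨆ a : bSet 𝔹, bvMem a (check 𝔹 ⟨ι₁, A₁⟩) ⊓
          bvMem (kpair a (check 𝔹 (A₂ j))) f :=
      le_trans (le_trans hle inf_le_right) (iInf_le _ (check 𝔹 (A₂ j)))
    rw [show bvMem (check 𝔹 (A₂ j)) (check 𝔹 ⟨ι₂, A₂⟩) = ⊤ from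
      check_bvMem_top ⟨ι₂, A₂⟩ j, top_himp] at h
    refine le_trans h (iSup_le fun a => ?_)
    rw [check, bvMem, iSup_inf_eq]
    refine iSup_le fun i => le_iSup_of_le i ?_
    rw [top_inf_eq]
    exact le_trans
      (inf_le_inf_right _ (bvEq_kpair_left a (check 𝔹 (A₁ i)) (check 𝔹 (A₂ j))))
      (bvEq_bvMem_left _ _ f)
  -- Step B: functionality gives an antichain in each fiber
  have hB : ∀ (i : ι₁) (j j' : ι₂), j ≠ j' → Γ ⊓ (M i j ⊓ M i j') = ⊥ := by
    intro i j j' hne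
    have hfun : Γ ≤ (M i j ⊓ M i j') ⇨
        bvEq (check 𝔹 (A₂ j)) (check 𝔹 (A₂ j')) := by
      refine le_trans hle ?_
      refine le_trans inf_le_left (le_trans inf_le_left (le_trans inf_le_left
        (le_trans inf_le_right ?_)))
      exact le_trans (iInf_le _ (check 𝔹 (A₁ i))) (le_trans
        (iInf_le _ (check 𝔹 (A₂ j))) (iInf_le _ (check 𝔹 (A₂ j'))))
    rw [check_bvEq_bot _ _ (hp₂ j j' hne), himp_bot] at hfun
    rw [eq_bot_iff]
    exact le_trans (inf_le_inf_right _ hfun) compl_inf_eq_bot.le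
  -- Step C: choose a preimage witness for each j
  have hC : ∀ j : ι₂, ∃ i : ι₁, Γ ⊓ M i j ≠ ⊥ := by
    intro j
    by_contra hc
    push_neg at hc
    have hΓeq : Γ = ⊥ := by
      have h1 : Γ = Γ ⊓ ⨆ i, M i j := (inf_eq_left.mpr (hA j)).symm
      rw [h1, inf_iSup_eq]
      simp [hc]
    exact hΓ.ne' hΓeq
  choose g hg using hC
  -- Step D: counting
  have hpair : ∀ (i : ι₁) (j j' : ι₂), j ≠ j' → (Γ ⊓ M i j) ⊓ (Γ ⊓ M i j') = ⊥ := by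
    intro i j j' hne
    rw [eq_bot_iff, ← hB i j j' hne]
    exact le_inf (le_trans inf_le_left inf_le_left)
      (inf_le_inf (inf_le_right) (inf_le_right))
  set S : ι₁ → Set 𝔹 :=
    fun i => Set.range (fun j : {j : ι₂ // g j = i} => Γ ⊓ M i j.1) with hSdef
  have hS : ∀ i, (S i).Countable := by
    intro i
    exact hccc _ _ (fun j j' hne => hpair i j.1 j'.1 (fun h => hne (Subtype.ext h)))
  set G : ι₂ → ι₁ × 𝔹 := fun j => (g j, Γ ⊓ M (g j) j) with hG
  have Ginj : Function.Injective G := by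
    intro j j' h
    have h1 : g j = g j' := congrArg Prod.fst h
    have h2 : Γ ⊓ M (g j) j = Γ ⊓ M (g j') j' := congrArg Prod.snd h
    rw [← h1] at h2
    by_contra hne
    have := hpair (g j) j j' hne
    rw [← h2, inf_idem] at this
    exact hg j this
  have hrange : Set.range G ⊆ ⋃ i, (fun b => (i, b)) '' S i := by
    rintro _ ⟨j, rfl⟩
    refine Set.mem_iUnion.2 ⟨g j, ⟨Γ ⊓ M (g j) j, ⟨⟨j, rfl⟩, rfl⟩, rfl⟩⟩
  have hfinal : #ι₂ ≤ #ι₁ * ℵ₀ := by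
    calc #ι₂ = #(Set.range G) := (Cardinal.mk_range_eq G Ginj).symm
      _ ≤ #(⋃ i, (fun b => (i, b)) '' S i) := Cardinal.mk_le_mk_of_subset hrange
      _ ≤ #ι₁ * ⨆ i, #((fun b => (i, b)) '' S i) := Cardinal.mk_iUnion_le _
      _ ≤ #ι₁ * ℵ₀ := by
          refine mul_le_mul_right (ciSup_le' fun i => ?_) _
          exact le_trans Cardinal.mk_image_le
            (Cardinal.mk_le_aleph0_iff.2 (hS i).to_subtype)
  exact hcard hfinal

open bSet Cardinal in
/-- The ordinal-encoding version of the counting lemma. -/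
theorem ccc_ord_no_collapse {𝔹 : Type u} [CompleteBooleanAlgebra 𝔹] (hccc : CCC 𝔹)
    (κ₁ κ₂ : Cardinal.{u}) (h₁ : ℵ₀ ≤ κ₁) (hlt : κ₁ < κ₂)
    (f : bSet 𝔹) (Γ : 𝔹) (hΓ : ⊥ < Γ) :
    ¬ Γ ≤ isSurjOnto (check 𝔹 (ordinalMk κ₁.ord)) (check 𝔹 (ordinalMk κ₂.ord)) f := by
  intro hle
  rw [ordinalMk, ordinalMk] at hle
  refine ccc_main_lemma hccc (ordinalMk_pairwise' κ₂.ord) ?_ f Γ hΓ hle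
  rw [Cardinal.mk_toType, Cardinal.mk_toType, Cardinal.card_ord, Cardinal.card_ord,
    Cardinal.mul_eq_left h₁ h₁ Cardinal.aleph0_ne_zero]
  exact hlt.not_ge

open bSet Cardinal in
/-- If `𝔹` has the countable chain condition then: no nonzero truth value forces a
surjection from `ω̌` onto `ℵ₁̌`, none forces a surjection from `ℵ₁̌` onto `ℵ₂̌`
(equivalently, the corresponding existential truth values are `⊥`), and in general
for infinite regular cardinals `κ₁ < κ₂` no nonzero truth value forces a surjection
from `κ₁̌` onto `κ₂̌`. -/
theorem ccc_no_collapse {𝔹 : Type u} [CompleteBooleanAlgebra 𝔹] (hccc : CCC 𝔹) :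
    ((⨆ f : bSet 𝔹, isSurjOnto (check 𝔹 PSet.omega)
        (check 𝔹 (ordinalMk (aleph 1).ord)) f) = ⊥) ∧
    ((⨆ f : bSet 𝔹, isSurjOnto (check 𝔹 (ordinalMk (aleph 1).ord))
        (check 𝔹 (ordinalMk (aleph 2).ord)) f) = ⊥) ∧
    (∀ κ₁ κ₂ : Cardinal.{u}, ℵ₀ ≤ κ₁ → κ₁.IsRegular → κ₂.IsRegular → κ₁ < κ₂ →
      ∀ (f : bSet 𝔹) (Γ : 𝔹), ⊥ < Γ →
        ¬ Γ ≤ isSurjOnto (check 𝔹 (ordinalMk κ₁.ord)) (check 𝔹 (ordinalMk κ₂.ord)) f) := by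
  have homega : PSet.omega = ⟨ULift ℕ, fun n => PSet.ofNat n.down⟩ := rfl
  refine ⟨?_, ?_, ?_⟩
  · rw [iSup_eq_bot]
    intro f
    by_contra hne
    have hΓ : ⊥ < isSurjOnto (check 𝔹 PSet.omega)
        (check 𝔹 (ordinalMk (aleph 1).ord)) f := bot_lt_iff_ne_bot.2 hne
    have hle := le_refl (isSurjOnto (check 𝔹 PSet.omega)
        (check 𝔹 (ordinalMk (aleph 1).ord)) f)
    rw [homega, ordinalMk] at hle hΓ
    refine ccc_main_lemma hccc (ordinalMk_pairwise' (aleph 1).ord) ?_ f _ hΓ hle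
    rw [Cardinal.mk_toType, Cardinal.card_ord, Cardinal.mk_uLift, Cardinal.mk_nat,
      Cardinal.lift_aleph0, Cardinal.aleph0_mul_aleph0]
    exact Cardinal.aleph0_lt_aleph_one.not_ge
  · rw [iSup_eq_bot]
    intro f
    by_contra hne
    exact ccc_ord_no_collapse hccc (aleph 1) (aleph 2) (Cardinal.aleph0_le_aleph 1)
      (Cardinal.aleph_lt_aleph.2 one_lt_two) f _ (bot_lt_iff_ne_bot.2 hne) le_rfl
  · intro κ₁ κ₂ h₁ _ _ hlt f Γ hΓ
    exact ccc_ord_no_collapse hccc κ₁ κ₂ h₁ hlt f Γ hΓ
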